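/- Let d be a positive integer, α ∈ (0,2), s ∈ [0,α), and let β satisfy α/(d − s + α) < β < α/d. Let μ be a nonzero finite Borel measure on ℝ^d with compact support S satisfying condition (F2)-s with constant C̲. Let c₁ > 0 and let D : ℝ^d → ℝ be bounded on every bounded subset of ℝ^d and satisfy D(u) ≤ c₁/(1 + |u|^{d+α}) for all |u| ≥ 2. Then there exists Λ₀ > 0 such that for every k ≥ Λ₀ and every (t,x) with t > 0 and x ∈ ℝ^d: the map τ ↦ h_k(τ,x) is differentiable at t, and ∂_t h_k(t,x) − k · t^{-1/β − 1}(1 + t^{-s/α}) ∫_{ℝ^d} D(t^{-1/α}(x − y)) dμ(y) + h_k(t,x)^{1+β} ≥ 0. -/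

import Mathlib

open MeasureTheory Metric Set Filter Topology

/-- The profile function `W(r) = log(e + r²)/(1 + r^{d+α})`. -/
noncomputable def Wfn (d : ℕ) (α r : ℝ) : ℝ :=
  Real.log (Real.exp 1 + r ^ 2) / (1 + r ^ ((d : ℝ) + α))

/-- `w_t(x) = t^{-1/β}(1 + t^{-s/α}) W(t^{-1/α}|x|)`. -/
noncomputable def wfn (d : ℕ) (α β s t : ℝ) (x : EuclideanSpace ℝ (Fin d)) : ℝ :=
  t ^ (-(1:ℝ)/β) * (1 + t ^ (-s/α)) * Wfn d α (t ^ (-(1:ℝ)/α) * ‖x‖)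

/-- `h_k(t,x) = k ∫ w_t(x - y) dμ(y)`. -/
noncomputable def hfn (d : ℕ) (α β s : ℝ) (μ : Measure (EuclideanSpace ℝ (Fin d)))
    (k t : ℝ) (x : EuclideanSpace ℝ (Fin d)) : ℝ :=
  k * ∫ y, wfn d α β s t (x - y) ∂μ

/-- `S` is the closed support of `μ`. -/
def IsSupportOf (d : ℕ) (μ : Measure (EuclideanSpace ℝ (Fin d)))
    (S : Set (EuclideanSpace ℝ (Fin d))) : Prop :=
  IsClosed S ∧ μ Sᶜ = 0 ∧ ∀ x ∈ S, ∀ r : ℝ, 0 < r → 0 < μ (ball x r)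

/-- Condition (F2)-s with constant `Cund` on the set `S`. -/
def IsF2 (d : ℕ) (μ : Measure (EuclideanSpace ℝ (Fin d)))
    (S : Set (EuclideanSpace ℝ (Fin d))) (Cund s : ℝ) : Prop :=
  ∀ x ∈ S, ∀ r : ℝ, 0 < r → r ≤ 1 →
    ENNReal.ofReal (Cund * r ^ s) ≤ μ (closedBall x r)

lemma one_le_logE (r : ℝ) : 1 ≤ Real.log (Real.exp 1 + r ^ 2) := by
  have h1 : Real.exp 1 ≤ Real.exp 1 + r ^ 2 := le_add_of_nonneg_right (sq_nonneg r)
  calc (1:ℝ) = Real.log (Real.exp 1) := (Real.log_exp 1).symm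
    _ ≤ _ := Real.log_le_log (Real.exp_pos 1) h1

lemma P_pos {d : ℕ} {α r : ℝ} (hr : 0 ≤ r) : 0 < 1 + r ^ ((d : ℝ) + α) := by
  have := Real.rpow_nonneg hr ((d : ℝ) + α); linarith

lemma one_le_P {d : ℕ} {α r : ℝ} (hr : 0 ≤ r) : 1 ≤ 1 + r ^ ((d : ℝ) + α) := by
  have := Real.rpow_nonneg hr ((d : ℝ) + α); linarith

lemma Wfn_pos {d : ℕ} {α r : ℝ} (hr : 0 ≤ r) : 0 < Wfn d α r :=
  div_pos (lt_of_lt_of_le one_pos (one_le_logE r)) (P_pos hr)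

lemma Wfn_nonneg {d : ℕ} {α r : ℝ} (hr : 0 ≤ r) : 0 ≤ Wfn d α r := (Wfn_pos hr).le

lemma Wfn_ge {d : ℕ} {α r M : ℝ} (hα : 0 < α) (hr : 0 ≤ r) (hrM : r ≤ M) :
    (1 + M ^ ((d : ℝ) + α))⁻¹ ≤ Wfn d α r := by
  have hm : (0:ℝ) ≤ (d:ℝ) + α := add_nonneg (Nat.cast_nonneg d) hα.le
  have h1 : r ^ ((d : ℝ) + α) ≤ M ^ ((d : ℝ) + α) := Real.rpow_le_rpow hr hrM hm
  calc (1 + M ^ ((d : ℝ) + α))⁻¹ ≤ (1 + r ^ ((d : ℝ) + α))⁻¹ := by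
        apply inv_anti₀ (P_pos hr); linarith
    _ ≤ Wfn d α r := by
        rw [Wfn, div_eq_mul_inv]
        calc (1 + r ^ ((d:ℝ)+α))⁻¹ = 1 * (1 + r ^ ((d:ℝ)+α))⁻¹ := (one_mul _).symm
          _ ≤ _ := mul_le_mul_of_nonneg_right (one_le_logE r) (inv_nonneg.mpr (P_pos hr).le)

lemma Wfn_le_four {d : ℕ} {α r : ℝ} (hd : 1 ≤ d) (hα : 0 < α) (hr : 0 ≤ r) :
    Wfn d α r ≤ 4 := by
  have hm : (1:ℝ) ≤ (d:ℝ) + α := by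
    have : (1:ℝ) ≤ (d:ℝ) := by exact_mod_cast hd
    linarith
  have hP := P_pos (d := d) (α := α) hr
  have he1 : Real.exp 1 < 2.7182818286 := Real.exp_one_lt_d9
  have he0 : (2.7182818283:ℝ) < Real.exp 1 := Real.exp_one_gt_d9
  rcases le_or_gt r 1 with h1 | h1
  · have hL : Real.log (Real.exp 1 + r ^ 2) ≤ 2 := by
      have hstep : Real.exp 1 + r ^ 2 ≤ Real.exp 2 := by
        have h2 : Real.exp 1 * Real.exp 1 = Real.exp 2 := by
          rw [← Real.exp_add]; norm_num
        nlinarith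
      calc Real.log (Real.exp 1 + r ^ 2) ≤ Real.log (Real.exp 2) :=
            Real.log_le_log (by positivity) hstep
        _ = 2 := Real.log_exp 2
    calc Wfn d α r ≤ Real.log (Real.exp 1 + r ^ 2) :=
          div_le_self (le_trans one_pos.le (one_le_logE r)) (one_le_P hr)
      _ ≤ 4 := by linarith
  · -- r > 1
    have hrm : r ≤ r ^ ((d : ℝ) + α) := by
      calc r = r ^ (1:ℝ) := (Real.rpow_one r).symm
        _ ≤ r ^ ((d:ℝ) + α) := Real.rpow_le_rpow_of_exponent_le h1.le hm
    have hL : Real.log (Real.exp 1 + r ^ 2) ≤ 2 + 2 * r := by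
      have hr2 : 1 ≤ r ^ 2 := by nlinarith
      have hstep : Real.exp 1 + r ^ 2 ≤ (Real.exp 1 + 1) * r ^ 2 := by nlinarith [Real.exp_pos 1]
      have hsplit : Real.log (Real.exp 1 + r ^ 2) ≤ Real.log (Real.exp 1 + 1) + 2 * Real.log r := by
        calc Real.log (Real.exp 1 + r ^ 2) ≤ Real.log ((Real.exp 1 + 1) * r ^ 2) :=
              Real.log_le_log (by positivity) hstep
          _ = Real.log (Real.exp 1 + 1) + Real.log (r ^ 2) := by
              rw [Real.log_mul (by positivity) (by positivity)]
          _ = Real.log (Real.exp 1 + 1) + 2 * Real.log r := by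
              rw [Real.log_pow]; push_cast; ring
      have hlogr : Real.log r ≤ r - 1 := by
        have := Real.log_le_sub_one_of_pos (x := r) (by linarith)
        linarith
      have hloge : Real.log (Real.exp 1 + 1) ≤ 2 := by
        have h2e : Real.exp 1 + 1 ≤ 2 * Real.exp 1 := by nlinarith
        have hlog2 : Real.log 2 ≤ 1 := by
          have := Real.log_le_sub_one_of_pos (x := (2:ℝ)) (by norm_num)
          linarith
        calc Real.log (Real.exp 1 + 1) ≤ Real.log (2 * Real.exp 1) :=
              Real.log_le_log (by positivity) h2e
          _ = Real.log 2 + 1 := by rw [Real.log_mul (by norm_num) (by positivity), Real.log_exp]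
          _ ≤ 2 := by linarith
      nlinarith
    rw [Wfn, div_le_iff₀ hP]
    nlinarith


noncomputable def Efun (d : ℕ) (α β s t r : ℝ) : ℝ :=
  -(1/β) - (s/α) * (t ^ (-s/α) / (1 + t ^ (-s/α)))
  - (2/α) * ((t ^ (-(1:ℝ)/α) * r) ^ 2 /
      ((Real.exp 1 + (t ^ (-(1:ℝ)/α) * r) ^ 2) * Real.log (Real.exp 1 + (t ^ (-(1:ℝ)/α) * r) ^ 2)))
  + (((d:ℝ) + α)/α) * ((t ^ (-(1:ℝ)/α) * r) ^ ((d:ℝ) + α) / (1 + (t ^ (-(1:ℝ)/α) * r) ^ ((d:ℝ) + α)))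

lemma hasDerivAt_phi (d : ℕ) {α β s t r : ℝ}
    (hα : 0 < α) (hβ : 0 < β) (ht : 0 < t) (hr : 0 ≤ r) :
    HasDerivAt (fun τ : ℝ => τ ^ (-(1:ℝ)/β) * (1 + τ ^ (-s/α)) * Wfn d α (τ ^ (-(1:ℝ)/α) * r))
      (t⁻¹ * (t ^ (-(1:ℝ)/β) * (1 + t ^ (-s/α)) * Wfn d α (t ^ (-(1:ℝ)/α) * r))
        * Efun d α β s t r) t := by
  have hm0 : 0 ≤ (d:ℝ) + α := add_nonneg (Nat.cast_nonneg d) hα.le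
  have hcast : ∀ τ : ℝ, 0 < τ → (τ ^ (-(1:ℝ)/α) * r) ^ 2 = τ ^ (-(2:ℝ)/α) * r ^ 2 := by
    intro τ hτ
    rw [mul_pow, ← Real.rpow_natCast (τ ^ (-(1:ℝ)/α)) 2, ← Real.rpow_mul hτ.le]
    norm_num
    left; congr 1; ring
  have hcast2 : ∀ τ : ℝ, 0 < τ →
      (τ ^ (-(1:ℝ)/α) * r) ^ ((d:ℝ)+α) = τ ^ (-((d:ℝ)+α)/α) * r ^ ((d:ℝ)+α) := by
    intro τ hτ
    rw [Real.mul_rpow (Real.rpow_nonneg hτ.le _) hr, ← Real.rpow_mul hτ.le]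
    rw [show -(1:ℝ)/α * ((d:ℝ)+α) = -((d:ℝ)+α)/α by ring]
  -- nice form G
  set G : ℝ → ℝ := fun τ =>
    τ ^ (-(1:ℝ)/β) * (1 + τ ^ (-s/α)) * Real.log (Real.exp 1 + τ ^ (-(2:ℝ)/α) * r ^ 2)
      * (1 + τ ^ (-((d:ℝ)+α)/α) * r ^ ((d:ℝ)+α))⁻¹ with hGdef
  have heq : (fun τ : ℝ => τ ^ (-(1:ℝ)/β) * (1 + τ ^ (-s/α)) * Wfn d α (τ ^ (-(1:ℝ)/α) * r))
      =ᶠ[𝓝 t] G := by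
    filter_upwards [Ioi_mem_nhds ht] with τ hτ
    simp only [hGdef]
    rw [Wfn, hcast τ hτ, hcast2 τ hτ]
    ring
  have ht' : t ≠ 0 := ht.ne'
  have hb0 : 0 ≤ r ^ ((d:ℝ)+α) := Real.rpow_nonneg hr _
  have hLpos : (0:ℝ) < Real.exp 1 + t ^ (-(2:ℝ)/α) * r ^ 2 := by positivity
  have hL1 : 1 ≤ Real.log (Real.exp 1 + t ^ (-(2:ℝ)/α) * r ^ 2) := by
    rw [← hcast t ht]; exact one_le_logE _
  have hPpos : (0:ℝ) < 1 + t ^ (-((d:ℝ)+α)/α) * r ^ ((d:ℝ)+α) := by positivity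
  have hQpos : (0:ℝ) < 1 + t ^ (-s/α) := by positivity
  have h1 : HasDerivAt (fun τ : ℝ => τ ^ (-(1:ℝ)/β)) ((-(1:ℝ)/β) * t ^ (-(1:ℝ)/β - 1)) t :=
    Real.hasDerivAt_rpow_const (Or.inl ht')
  have h2 : HasDerivAt (fun τ : ℝ => 1 + τ ^ (-s/α)) ((-s/α) * t ^ (-s/α - 1)) t :=
    (Real.hasDerivAt_rpow_const (p := -s/α) (Or.inl ht')).const_add 1
  have h3 : HasDerivAt (fun τ : ℝ => Real.exp 1 + τ ^ (-(2:ℝ)/α) * r ^ 2)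
      ((-(2:ℝ)/α) * t ^ (-(2:ℝ)/α - 1) * r ^ 2) t :=
    ((Real.hasDerivAt_rpow_const (p := -(2:ℝ)/α) (Or.inl ht')).mul_const _).const_add _
  have hLd : HasDerivAt (fun τ : ℝ => Real.log (Real.exp 1 + τ ^ (-(2:ℝ)/α) * r ^ 2))
      (((-(2:ℝ)/α) * t ^ (-(2:ℝ)/α - 1) * r ^ 2) / (Real.exp 1 + t ^ (-(2:ℝ)/α) * r ^ 2)) t :=
    h3.log hLpos.ne'
  have h4 : HasDerivAt (fun τ : ℝ => 1 + τ ^ (-((d:ℝ)+α)/α) * r ^ ((d:ℝ)+α))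
      ((-((d:ℝ)+α)/α) * t ^ (-((d:ℝ)+α)/α - 1) * r ^ ((d:ℝ)+α)) t :=
    ((Real.hasDerivAt_rpow_const (p := -((d:ℝ)+α)/α) (Or.inl ht')).mul_const _).const_add _
  have h5 : HasDerivAt (fun τ : ℝ => (1 + τ ^ (-((d:ℝ)+α)/α) * r ^ ((d:ℝ)+α))⁻¹)
      (-((-((d:ℝ)+α)/α) * t ^ (-((d:ℝ)+α)/α - 1) * r ^ ((d:ℝ)+α))
        / (1 + t ^ (-((d:ℝ)+α)/α) * r ^ ((d:ℝ)+α)) ^ 2) t := h4.inv hPpos.ne'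
  have hGd : HasDerivAt G
      (((((-(1:ℝ)/β) * t ^ (-(1:ℝ)/β - 1)) * (1 + t ^ (-s/α))
          + t ^ (-(1:ℝ)/β) * ((-s/α) * t ^ (-s/α - 1)))
            * Real.log (Real.exp 1 + t ^ (-(2:ℝ)/α) * r ^ 2)
        + t ^ (-(1:ℝ)/β) * (1 + t ^ (-s/α))
            * (((-(2:ℝ)/α) * t ^ (-(2:ℝ)/α - 1) * r ^ 2) / (Real.exp 1 + t ^ (-(2:ℝ)/α) * r ^ 2)))
          * (1 + t ^ (-((d:ℝ)+α)/α) * r ^ ((d:ℝ)+α))⁻¹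
        + t ^ (-(1:ℝ)/β) * (1 + t ^ (-s/α)) * Real.log (Real.exp 1 + t ^ (-(2:ℝ)/α) * r ^ 2)
          * (-((-((d:ℝ)+α)/α) * t ^ (-((d:ℝ)+α)/α - 1) * r ^ ((d:ℝ)+α))
            / (1 + t ^ (-((d:ℝ)+α)/α) * r ^ ((d:ℝ)+α)) ^ 2)) t :=
    ((h1.mul h2).mul hLd).mul h5
  have final := hGd.congr_of_eventuallyEq heq
  refine final.congr_deriv ?_
  rw [Wfn, Efun, hcast t ht, hcast2 t ht]
  rw [Real.rpow_sub ht (-(1:ℝ)/β) 1, Real.rpow_sub ht (-s/α) 1,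
    Real.rpow_sub ht (-(2:ℝ)/α) 1, Real.rpow_sub ht (-((d:ℝ)+α)/α) 1, Real.rpow_one]
  have hLne : Real.log (Real.exp 1 + t ^ (-(2:ℝ)/α) * r ^ 2) ≠ 0 := (lt_of_lt_of_le one_pos hL1).ne'
  generalize Real.log (Real.exp 1 + t ^ (-(2:ℝ)/α) * r ^ 2) = L at hLne ⊢
  generalize t ^ (-((d:ℝ)+α)/α) = b at hPpos ⊢
  field_simp
  ring


section EfunBounds
variable {d : ℕ} {α β s t r : ℝ}

lemma ratio_bounds (hα : 0 < α) (ht : 0 < t) (hr : 0 ≤ r) :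
    (0 ≤ t ^ (-s/α) / (1 + t ^ (-s/α)) ∧ t ^ (-s/α) / (1 + t ^ (-s/α)) ≤ 1)
    ∧ (0 ≤ (t ^ (-(1:ℝ)/α) * r) ^ 2 /
        ((Real.exp 1 + (t ^ (-(1:ℝ)/α) * r) ^ 2) * Real.log (Real.exp 1 + (t ^ (-(1:ℝ)/α) * r) ^ 2))
      ∧ (t ^ (-(1:ℝ)/α) * r) ^ 2 /
        ((Real.exp 1 + (t ^ (-(1:ℝ)/α) * r) ^ 2) * Real.log (Real.exp 1 + (t ^ (-(1:ℝ)/α) * r) ^ 2)) ≤ 1)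
    ∧ (0 ≤ (t ^ (-(1:ℝ)/α) * r) ^ ((d:ℝ) + α) / (1 + (t ^ (-(1:ℝ)/α) * r) ^ ((d:ℝ) + α))
      ∧ (t ^ (-(1:ℝ)/α) * r) ^ ((d:ℝ) + α) / (1 + (t ^ (-(1:ℝ)/α) * r) ^ ((d:ℝ) + α)) ≤ 1) := by
  have hσ : 0 < t ^ (-s/α) := Real.rpow_pos_of_pos ht _
  set ξ := (t ^ (-(1:ℝ)/α) * r) ^ 2 with hξ
  have hξ0 : 0 ≤ ξ := sq_nonneg _
  set L := Real.log (Real.exp 1 + ξ) with hL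
  have hL1 : 1 ≤ L := one_le_logE _
  have hLpos : 0 < L := lt_of_lt_of_le one_pos hL1
  have hepos : 0 < Real.exp 1 + ξ := by positivity
  set η := (t ^ (-(1:ℝ)/α) * r) ^ ((d:ℝ) + α) with hη
  have hη0 : 0 ≤ η := Real.rpow_nonneg (by positivity) _
  refine ⟨⟨by positivity, ?_⟩, ⟨by positivity, ?_⟩, ⟨by positivity, ?_⟩⟩
  · rw [div_le_one (by linarith)]; linarith
  · rw [div_le_one (by positivity)]
    nlinarith [Real.exp_pos 1]
  · rw [div_le_one (by linarith)]; linarith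

lemma Efun_lower (hα : 0 < α) (hβ : 0 < β) (hs : 0 ≤ s) (ht : 0 < t) (hr : 0 ≤ r) :
    -(1/β + s/α + 2/α) ≤ Efun d α β s t r := by
  obtain ⟨⟨u10, u11⟩, ⟨u20, u21⟩, ⟨u30, u31⟩⟩ := ratio_bounds (d := d) (s := s) hα ht hr
  rw [Efun]
  have h1 : 0 ≤ s/α := by positivity
  have h2 : 0 ≤ 2/α := by positivity
  have h3 : 0 ≤ ((d:ℝ) + α)/α := by positivity
  nlinarith

lemma Efun_upper (hα : 0 < α) (hβ : 0 < β) (hs : 0 ≤ s) (ht : 0 < t) (hr : 0 ≤ r) :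
    Efun d α β s t r ≤ 1/β + s/α + 2/α + ((d:ℝ) + α)/α := by
  obtain ⟨⟨u10, u11⟩, ⟨u20, u21⟩, ⟨u30, u31⟩⟩ := ratio_bounds (d := d) (s := s) hα ht hr
  rw [Efun]
  have h1 : 0 ≤ s/α := by positivity
  have h2 : 0 ≤ 2/α := by positivity
  have h3 : 0 ≤ ((d:ℝ) + α)/α := by positivity
  have h4 : 0 < 1/β := by positivity
  nlinarith

lemma abs_Efun_le (hα : 0 < α) (hβ : 0 < β) (hs : 0 ≤ s) (ht : 0 < t) (hr : 0 ≤ r) :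
    |Efun d α β s t r| ≤ 1/β + s/α + 2/α + ((d:ℝ) + α)/α := by
  rw [abs_le]
  have h3 : 0 ≤ ((d:ℝ) + α)/α := by positivity
  exact ⟨by linarith [Efun_lower (d := d) hα hβ hs ht hr],
    Efun_upper hα hβ hs ht hr⟩

/-- Far-field positivity of `Efun`. -/
lemma Efun_far {δ : ℝ} (hα : 0 < α) (hβ : 0 < β) (hs : 0 ≤ s) (ht : 0 < t) (hr : 0 ≤ r)
    (hδ : δ = ((d:ℝ) + α)/α - 1/β - s/α)
    (h1 : (2/α) * (1 / Real.log (Real.exp 1 + (t ^ (-(1:ℝ)/α) * r) ^ 2)) ≤ δ/4)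
    (h2 : (((d:ℝ) + α)/α) * (1 / (1 + (t ^ (-(1:ℝ)/α) * r) ^ ((d:ℝ) + α))) ≤ δ/4) :
    δ/2 ≤ Efun d α β s t r := by
  obtain ⟨⟨u10, u11⟩, ⟨u20, u21⟩, ⟨u30, u31⟩⟩ := ratio_bounds (d := d) (s := s) hα ht hr
  rw [Efun]
  set ξ := (t ^ (-(1:ℝ)/α) * r) ^ 2 with hξ
  have hξ0 : 0 ≤ ξ := sq_nonneg _
  set L := Real.log (Real.exp 1 + ξ) with hL
  have hL1 : 1 ≤ L := one_le_logE _
  have hLpos : 0 < L := lt_of_lt_of_le one_pos hL1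
  have hepos : 0 < Real.exp 1 + ξ := by positivity
  set η := (t ^ (-(1:ℝ)/α) * r) ^ ((d:ℝ) + α) with hη
  have hη0 : 0 ≤ η := Real.rpow_nonneg (by positivity) _
  have hη1 : 0 < 1 + η := by linarith
  -- second ratio ≤ 1/L
  have hr2 : ξ / ((Real.exp 1 + ξ) * L) ≤ 1 / L := by
    rw [div_le_div_iff₀ (by positivity) hLpos]
    nlinarith [Real.exp_pos 1]
  -- third ratio = 1 - 1/(1+η)
  have hr3 : η / (1 + η) = 1 - 1 / (1 + η) := by field_simp; ring
  have hsα : 0 ≤ s/α := by positivity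
  have h2α : 0 ≤ 2/α := by positivity
  have hmα : 0 ≤ ((d:ℝ) + α)/α := by positivity
  have key1 : (2/α) * (ξ / ((Real.exp 1 + ξ) * L)) ≤ δ/4 :=
    le_trans (mul_le_mul_of_nonneg_left hr2 h2α) h1
  have key2 : (((d:ℝ) + α)/α) * (η / (1 + η)) ≥ ((d:ℝ) + α)/α - δ/4 := by
    rw [hr3, mul_sub]
    have := mul_le_mul_of_nonneg_left (le_refl (1/(1+η))) hmα
    linarith [h2]
  nlinarith
end EfunBounds

section Cont
variable {d : ℕ} {α β s c : ℝ} {E : Type*} [NormedAddCommGroup E]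
  [NormedSpace ℝ E] (x : E)

lemma cont_rho (hc : 0 ≤ c) : Continuous (fun y : E => c * ‖x - y‖) :=
  continuous_const.mul ((continuous_const.sub continuous_id).norm)

lemma cont_rpow_comp (hα : 0 < α) (hc : 0 ≤ c) (hm : 0 < (d:ℝ) + α) :
    Continuous (fun y : E => (c * ‖x - y‖) ^ ((d:ℝ) + α)) := by
  apply Continuous.rpow_const (cont_rho x hc)
  intro y; right; exact hm.le

lemma cont_W (hα : 0 < α) (hc : 0 ≤ c) :
    Continuous (fun y : E => Wfn d α (c * ‖x - y‖)) := by
  have hm : 0 < (d:ℝ) + α := by positivity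
  unfold Wfn
  apply Continuous.div
  · apply Continuous.log
    · exact continuous_const.add (((cont_rho x hc)).pow 2)
    · intro y
      have := sq_nonneg (c * ‖x - y‖)
      nlinarith [Real.exp_pos 1]
  · exact continuous_const.add (cont_rpow_comp x hα hc hm)
  · intro y
    have : 0 ≤ (c * ‖x - y‖) ^ ((d:ℝ) + α) := Real.rpow_nonneg (by positivity) _
    nlinarith

lemma cont_Efun {t : ℝ} (hα : 0 < α) (ht : 0 < t) :
    Continuous (fun y : E => Efun d α β s t ‖x - y‖) := by
  have hm : 0 < (d:ℝ) + α := by positivity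
  have hc : 0 ≤ t ^ (-(1:ℝ)/α) := (Real.rpow_pos_of_pos ht _).le
  have hρ : Continuous (fun y : E => t ^ (-(1:ℝ)/α) * ‖x - y‖) := cont_rho x hc
  unfold Efun
  apply Continuous.add
  · apply Continuous.sub
    · exact continuous_const
    · apply Continuous.mul continuous_const
      apply Continuous.div (hρ.pow 2)
      · apply Continuous.mul (continuous_const.add (hρ.pow 2))
        apply Continuous.log (continuous_const.add (hρ.pow 2))
        intro y; simp only [Pi.add_apply, Pi.pow_apply]; nlinarith [Real.exp_pos 1, sq_nonneg (t ^ (-(1:ℝ)/α) * ‖x - y‖)]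
      · intro y
        have h1 : 0 < Real.exp 1 + (t ^ (-(1:ℝ)/α) * ‖x - y‖) ^ 2 := by
          nlinarith [Real.exp_pos 1, sq_nonneg (t ^ (-(1:ℝ)/α) * ‖x - y‖)]
        have h2 : 1 ≤ Real.log (Real.exp 1 + (t ^ (-(1:ℝ)/α) * ‖x - y‖) ^ 2) := one_le_logE _
        positivity
  · apply Continuous.mul continuous_const
    apply Continuous.div
    · exact Continuous.rpow_const hρ (fun y => Or.inr hm.le)
    · exact continuous_const.add (Continuous.rpow_const hρ (fun y => Or.inr hm.le))
    · intro y
      have : 0 ≤ (t ^ (-(1:ℝ)/α) * ‖x - y‖) ^ ((d:ℝ) + α) := Real.rpow_nonneg (by positivity) _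
      linarith
end Cont

set_option maxHeartbeats 1000000 in
/-- (Proposition 7.1(a)) For `k ≥ Λ₀`, `h_k` is a supersolution of
`∂_t u = Δ_α u - u^{1+β}`, where the fractional Laplacian term is represented via the
function `D` (playing the role of `Δ_α V`):
`∂_t h_k(t,x) - k t^{-1/β-1}(1+t^{-s/α}) ∫ D(t^{-1/α}(x-y)) dμ(y) + h_k(t,x)^{1+β} ≥ 0`. -/
theorem stmt_10 (d : ℕ) (hd : 0 < d) (α β s : ℝ) (hα : α ∈ Ioo (0:ℝ) 2)
    (hs : s ∈ Ico (0:ℝ) α) (hβ₁ : α / ((d:ℝ) - s + α) < β) (hβ₂ : β < α / d)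
    (μ : Measure (EuclideanSpace ℝ (Fin d))) [IsFiniteMeasure μ] (hμ : μ ≠ 0)
    (S : Set (EuclideanSpace ℝ (Fin d))) (hScpt : IsCompact S)
    (hSsupp : IsSupportOf d μ S)
    (Cund : ℝ) (hCund : 0 < Cund) (hF2 : IsF2 d μ S Cund s)
    (c₁ : ℝ) (hc₁ : 0 < c₁) (D : EuclideanSpace ℝ (Fin d) → ℝ) (hDmeas : Measurable D)
    (hDbdd : ∀ M : ℝ, ∃ C : ℝ, ∀ u : EuclideanSpace ℝ (Fin d), ‖u‖ ≤ M → |D u| ≤ C)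
    (hDdecay : ∀ u : EuclideanSpace ℝ (Fin d), 2 ≤ ‖u‖ →
      D u ≤ c₁ / (1 + ‖u‖ ^ ((d:ℝ) + α))) :
    ∃ Λ₀ > (0:ℝ), ∀ k : ℝ, Λ₀ ≤ k → ∀ t > (0:ℝ), ∀ x : EuclideanSpace ℝ (Fin d),
      DifferentiableAt ℝ (fun τ => hfn d α β s μ k τ x) t ∧
      0 ≤ deriv (fun τ => hfn d α β s μ k τ x) t -
            k * t ^ (-(1:ℝ)/β - 1) * (1 + t ^ (-s/α)) *
              (∫ y, D ((t ^ (-(1:ℝ)/α)) • (x - y)) ∂μ) +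
          hfn d α β s μ k t x ^ (1 + β) := by
  obtain ⟨hα0, hα2⟩ := hα
  obtain ⟨hs0, hsα⟩ := hs
  have hd1 : (1:ℝ) ≤ (d:ℝ) := by exact_mod_cast hd
  have hdsα : (0:ℝ) < (d:ℝ) - s + α := by linarith
  have hβ0 : 0 < β := lt_trans (div_pos hα0 hdsα) hβ₁
  set δ : ℝ := ((d:ℝ) + α)/α - 1/β - s/α with hδdef
  have hδ : 0 < δ := by
    have h : α < β * ((d:ℝ) - s + α) := by
      have := (div_lt_iff₀ hdsα).mp hβ₁
      linarith
    have key : δ = (β * ((d:ℝ) - s + α) - α)/(α * β) := by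
      rw [hδdef]; field_simp; ring
    rw [key]
    exact div_pos (by linarith) (by positivity)
  clear_value δ
  have hm1 : (1:ℝ) ≤ (d:ℝ) + α := by linarith
  have hm0 : (0:ℝ) < (d:ℝ) + α := by linarith
  have hαδ : 0 < α * δ := mul_pos hα0 hδ
  set R₀ : ℝ := 2 + 4*((d:ℝ)+α)/(α*δ) + Real.exp (8/(α*δ) + 4*c₁/δ) with hR₀def
  have hmid : 0 ≤ 4*((d:ℝ)+α)/(α*δ) := div_nonneg (by linarith) hαδ.le
  have hexppos := Real.exp_pos (8/(α*δ) + 4*c₁/δ)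
  have hR₀2 : 2 ≤ R₀ := by rw [hR₀def]; linarith
  have hR₀e : Real.exp (8/(α*δ) + 4*c₁/δ) ≤ R₀ := by rw [hR₀def]; linarith
  have hR₀m : 4*((d:ℝ)+α)/(α*δ) ≤ R₀ := by rw [hR₀def]; linarith
  clear_value R₀
  -- facts about ρ ≥ R₀
  have hlogfact : ∀ ρ : ℝ, R₀ ≤ ρ → 8/(α*δ) + 4*c₁/δ ≤ Real.log (Real.exp 1 + ρ ^ 2) := by
    intro ρ hρ
    have hρ2 : 2 ≤ ρ := le_trans hR₀2 hρ
    have h0 : ρ ≤ Real.exp 1 + ρ ^ 2 := by nlinarith [Real.exp_pos 1]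
    calc 8/(α*δ) + 4*c₁/δ = Real.log (Real.exp (8/(α*δ) + 4*c₁/δ)) := (Real.log_exp _).symm
      _ ≤ Real.log ρ := Real.log_le_log (Real.exp_pos _) (le_trans hR₀e hρ)
      _ ≤ Real.log (Real.exp 1 + ρ ^ 2) := Real.log_le_log (by linarith) h0
  have hrpowfact : ∀ ρ : ℝ, R₀ ≤ ρ → 4*((d:ℝ)+α)/(α*δ) ≤ 1 + ρ ^ ((d:ℝ)+α) := by
    intro ρ hρ
    have hρ2 : 2 ≤ ρ := le_trans hR₀2 hρ
    have h1 : ρ ≤ ρ ^ ((d:ℝ)+α) := by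
      calc ρ = ρ ^ (1:ℝ) := (Real.rpow_one ρ).symm
        _ ≤ ρ ^ ((d:ℝ)+α) := Real.rpow_le_rpow_of_exponent_le (by linarith) hm1
    linarith [le_trans hR₀m hρ]
  obtain ⟨C₂, hC₂⟩ := hDbdd R₀
  have hC₂0 : 0 ≤ C₂ := le_trans (abs_nonneg _) (hC₂ 0 (by rw [norm_zero]; linarith))
  set CE : ℝ := 1/β + s/α + 2/α with hCEdef
  have hCE : 0 < CE := by rw [hCEdef]; positivity
  set CE' : ℝ := CE + ((d:ℝ)+α)/α with hCE'def
  have hCE'eq : CE' = 1/β + s/α + 2/α + ((d:ℝ)+α)/α := by rw [hCE'def, hCEdef]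
  have hCE' : 0 < CE' := by rw [hCE'def]; have : 0 < ((d:ℝ)+α)/α := div_pos hm0 hα0; linarith
  set C₆ : ℝ := 4*CE + C₂ with hC₆def
  have hC₆ : 0 < C₆ := by rw [hC₆def]; linarith
  clear_value CE C₆
  have hw₁R : (0:ℝ) ≤ (R₀+1) ^ ((d:ℝ)+α) := Real.rpow_nonneg (by linarith) _
  set w₁ : ℝ := (1 + (R₀+1) ^ ((d:ℝ)+α))⁻¹ with hw₁def
  have hw₁ : 0 < w₁ := by rw [hw₁def]; exact inv_pos.mpr (by linarith)
  set c₇ : ℝ := Cund * w₁ with hc₇def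
  have hc₇ : 0 < c₇ := mul_pos hCund hw₁
  have hc₇β : 0 < c₇ ^ β := Real.rpow_pos_of_pos hc₇ β
  set Λ₀ : ℝ := max 1 ((1 + C₆/(w₁ * c₇ ^ β)) ^ (1/β)) with hΛ₀def
  refine ⟨Λ₀, lt_of_lt_of_le one_pos (le_max_left _ _), ?_⟩
  intro k hk t ht x
  have hk1 : (1:ℝ) ≤ k := le_trans (le_max_left _ _) hk
  have hk0 : (0:ℝ) < k := lt_of_lt_of_le one_pos hk1
  have hkey : C₆ / w₁ ≤ k ^ β * c₇ ^ β := by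
    have hX : (0:ℝ) ≤ 1 + C₆/(w₁ * c₇ ^ β) := by positivity
    have h1 : (1 + C₆/(w₁ * c₇ ^ β)) ^ (1/β) ≤ k := le_trans (le_max_right _ _) hk
    have h2 : ((1 + C₆/(w₁ * c₇ ^ β)) ^ (1/β)) ^ β ≤ k ^ β :=
      Real.rpow_le_rpow (Real.rpow_nonneg hX _) h1 hβ0.le
    rw [← Real.rpow_mul hX, one_div_mul_cancel hβ0.ne', Real.rpow_one] at h2
    have h3 : C₆/(w₁ * c₇ ^ β) ≤ k ^ β := by linarith
    have h4 := mul_le_mul_of_nonneg_right h3 hc₇β.le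
    calc C₆ / w₁ = C₆/(w₁ * c₇ ^ β) * c₇ ^ β := by field_simp
      _ ≤ k ^ β * c₇ ^ β := h4
  clear_value w₁ c₇ Λ₀
  -- setup at (t, x)
  set c : ℝ := t ^ (-(1:ℝ)/α) with hcdef
  have hc : 0 < c := Real.rpow_pos_of_pos ht _
  set σ : ℝ := t ^ (-s/α) with hσdef
  have hσ : 0 < σ := Real.rpow_pos_of_pos ht _
  set A : ℝ := t ^ (-(1:ℝ)/β) * (1 + σ) with hAdef
  have hA : 0 < A := mul_pos (Real.rpow_pos_of_pos ht _) (by linarith)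
  set Wy : EuclideanSpace ℝ (Fin d) → ℝ := fun y => Wfn d α (c * ‖x - y‖) with hWydef
  have hρ0 : ∀ y : EuclideanSpace ℝ (Fin d), 0 ≤ c * ‖x - y‖ :=
    fun y => mul_nonneg hc.le (norm_nonneg _)
  have hWy0 : ∀ y, 0 ≤ Wy y := fun y => Wfn_nonneg (hρ0 y)
  have hWy4 : ∀ y, Wy y ≤ 4 := fun y => Wfn_le_four hd hα0 (hρ0 y)
  have hWycont : Continuous Wy := cont_W x hα0 hc.le
  have hWyint : Integrable Wy μ := by
    refine (integrable_const (4:ℝ)).mono' hWycont.aestronglyMeasurable ?_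
    filter_upwards with y
    rw [Real.norm_eq_abs, abs_of_nonneg (hWy0 y)]
    exact hWy4 y
  set g : ℝ := ∫ y, Wy y ∂μ with hgdef
  have hg0 : 0 ≤ g := integral_nonneg hWy0
  -- the parametrized integrand and its derivative
  set F : ℝ → EuclideanSpace ℝ (Fin d) → ℝ := fun τ y =>
    τ ^ (-(1:ℝ)/β) * (1 + τ ^ (-s/α)) * Wfn d α (τ ^ (-(1:ℝ)/α) * ‖x - y‖) with hFdef
  set F' : ℝ → EuclideanSpace ℝ (Fin d) → ℝ := fun τ y =>
    τ⁻¹ * (τ ^ (-(1:ℝ)/β) * (1 + τ ^ (-s/α)) * Wfn d α (τ ^ (-(1:ℝ)/α) * ‖x - y‖))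
      * Efun d α β s τ ‖x - y‖ with hF'def
  have hFt : F t = fun y => A * Wy y := rfl
  have hF't : F' t = fun y => t⁻¹ * (A * Wy y) * Efun d α β s t ‖x - y‖ := rfl
  have hwfnhfn : (fun τ : ℝ => hfn d α β s μ k τ x) = fun τ => k * ∫ y, F τ y ∂μ := rfl
  have hball : ∀ τ : ℝ, τ ∈ ball t (t/2) → t/2 < τ ∧ τ < 3*t/2 := by
    intro τ hτ
    rw [mem_ball, Real.dist_eq, abs_lt] at hτ
    constructor <;> linarith [hτ.1, hτ.2]
  set boundC : ℝ := (2/t) * ((t/2) ^ (-(1:ℝ)/β) * (1 + (t/2) ^ (-s/α)) * 4) * CE' with hboundCdef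
  have hderiv_all : ∀ y : EuclideanSpace ℝ (Fin d), ∀ τ ∈ ball t (t/2),
      HasDerivAt (fun τ' => F τ' y) (F' τ y) τ := by
    intro y τ hτ
    have hτ0 : 0 < τ := lt_trans (by linarith) (hball τ hτ).1
    exact hasDerivAt_phi d hα0 hβ0 hτ0 (norm_nonneg _)
  have hbnd : ∀ y : EuclideanSpace ℝ (Fin d), ∀ τ ∈ ball t (t/2), ‖F' τ y‖ ≤ boundC := by
    intro y τ hτ
    obtain ⟨hτl, hτu⟩ := hball τ hτ
    have hτ0 : 0 < τ := lt_trans (by linarith) hτl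
    have ht2 : (0:ℝ) < t/2 := by linarith
    have hWτ0 : 0 ≤ Wfn d α (τ ^ (-(1:ℝ)/α) * ‖x - y‖) :=
      Wfn_nonneg (mul_nonneg (Real.rpow_pos_of_pos hτ0 _).le (norm_nonneg _))
    have hWτ4 : Wfn d α (τ ^ (-(1:ℝ)/α) * ‖x - y‖) ≤ 4 :=
      Wfn_le_four hd hα0 (mul_nonneg (Real.rpow_pos_of_pos hτ0 _).le (norm_nonneg _))
    have hEb : |Efun d α β s τ ‖x - y‖| ≤ CE' := by
      rw [hCE'eq]
      exact abs_Efun_le hα0 hβ0 hs0 hτ0 (norm_nonneg _)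
    have hiτ : τ⁻¹ ≤ 2/t := by
      have := inv_anti₀ ht2 hτl.le
      rwa [inv_div] at this
    have hAτβ : τ ^ (-(1:ℝ)/β) ≤ (t/2) ^ (-(1:ℝ)/β) :=
      Real.rpow_le_rpow_of_nonpos ht2 hτl.le (by
        apply div_nonpos_of_nonpos_of_nonneg <;> norm_num <;> linarith [hβ0.le])
    have hAτσ : τ ^ (-s/α) ≤ (t/2) ^ (-s/α) :=
      Real.rpow_le_rpow_of_nonpos ht2 hτl.le (by
        apply div_nonpos_of_nonpos_of_nonneg <;> linarith)
    have hAτ0 : 0 < τ ^ (-(1:ℝ)/β) := Real.rpow_pos_of_pos hτ0 _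
    have hAτσ0 : 0 < τ ^ (-s/α) := Real.rpow_pos_of_pos hτ0 _
    have key : τ⁻¹ * (τ ^ (-(1:ℝ)/β) * (1 + τ ^ (-s/α)) * Wfn d α (τ ^ (-(1:ℝ)/α) * ‖x - y‖))
        * |Efun d α β s τ ‖x - y‖| ≤ boundC := by
      rw [hboundCdef]
      apply mul_le_mul
      · apply mul_le_mul hiτ _ (by positivity) (by positivity)
        apply mul_le_mul _ hWτ4 hWτ0 (by positivity)
        apply mul_le_mul hAτβ _ (by linarith) (Real.rpow_pos_of_pos ht2 _).le
        linarith
      · exact hEb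
      · exact abs_nonneg _
      · positivity
    calc ‖F' τ y‖ = τ⁻¹ * (τ ^ (-(1:ℝ)/β) * (1 + τ ^ (-s/α)) * Wfn d α (τ ^ (-(1:ℝ)/α) * ‖x - y‖))
          * |Efun d α β s τ ‖x - y‖| := by
          rw [hF'def, Real.norm_eq_abs]
          simp only []
          rw [abs_mul, abs_mul, abs_of_pos (inv_pos.mpr hτ0), abs_of_nonneg
            (mul_nonneg (mul_nonneg hAτ0.le (by linarith)) hWτ0)]
      _ ≤ boundC := key
  have hFmeas : ∀ᶠ τ in 𝓝 t, AEStronglyMeasurable (F τ) μ := by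
    filter_upwards [Ioi_mem_nhds ht] with τ hτ
    have hcont : Continuous (F τ) :=
      continuous_const.mul (cont_W x hα0 (Real.rpow_pos_of_pos hτ _).le)
    exact hcont.aestronglyMeasurable
  have hFint : Integrable (F t) μ := by
    rw [hFt]
    exact hWyint.const_mul A
  have hF'meas : AEStronglyMeasurable (F' t) μ := by
    have hcont : Continuous (F' t) := by
      rw [hF't]
      exact ((continuous_const.mul (continuous_const.mul hWycont))).mul (cont_Efun x hα0 ht)
    exact hcont.aestronglyMeasurable
  obtain ⟨hF'int, hHasD⟩ :=
    hasDerivAt_integral_of_dominated_loc_of_deriv_le (ball_mem_nhds t (half_pos ht)) hFmeas hFint hF'meas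
      (Filter.Eventually.of_forall (fun y τ hτ => hbnd y τ hτ)) (integrable_const boundC)
      (Filter.Eventually.of_forall (fun y τ hτ => hderiv_all y τ hτ))
  have hDerivh : HasDerivAt (fun τ => hfn d α β s μ k τ x) (k * ∫ y, F' t y ∂μ) t := by
    rw [hwfnhfn]
    exact hHasD.const_mul k
  refine ⟨hDerivh.differentiableAt, ?_⟩
  rw [hDerivh.deriv]
  -- the inequality
  set J : ℝ := ∫ y, D (c • (x - y)) ∂μ with hJdef
  set N : Set (EuclideanSpace ℝ (Fin d)) := {y | c * ‖x - y‖ ≤ R₀} with hNdef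
  have hNmeas : MeasurableSet N :=
    measurableSet_le (cont_rho x hc.le).measurable measurable_const
  set mN : ℝ := (μ N).toReal with hmNdef
  have hmN0 : 0 ≤ mN := ENNReal.toReal_nonneg
  have hti : 0 < t⁻¹ := inv_pos.mpr ht
  -- pointwise lower bound for F' t
  have hF'low : ∀ y, -(t⁻¹ * A * (4*CE)) ≤ F' t y := by
    intro y
    have hW0 := hWy0 y; have hW4 := hWy4 y
    have hE : -CE ≤ Efun d α β s t ‖x - y‖ := by
      rw [hCEdef]
      have := Efun_lower (d := d) (β := β) (s := s) (r := ‖x - y‖) hα0 hβ0 hs0 ht (norm_nonneg _)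
      linarith
    have hthis : F' t y = t⁻¹ * (A * Wy y) * Efun d α β s t ‖x - y‖ := by rw [hF't]
    rw [hthis]
    have hbase : 0 ≤ t⁻¹ * (A * Wy y) := mul_nonneg hti.le (mul_nonneg hA.le hW0)
    have h2 : t⁻¹ * (A * Wy y) * (-CE) ≤ t⁻¹ * (A * Wy y) * Efun d α β s t ‖x - y‖ :=
      mul_le_mul_of_nonneg_left hE hbase
    have key : t⁻¹ * (A * Wy y) * CE ≤ t⁻¹ * A * (4 * CE) := by
      have h3 : A * Wy y ≤ A * 4 := mul_le_mul_of_nonneg_left hW4 hA.le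
      have h4 : t⁻¹ * (A * Wy y) ≤ t⁻¹ * (A * 4) := mul_le_mul_of_nonneg_left h3 hti.le
      calc t⁻¹ * (A * Wy y) * CE ≤ t⁻¹ * (A * 4) * CE :=
            mul_le_mul_of_nonneg_right h4 hCE.le
        _ = t⁻¹ * A * (4 * CE) := by ring
    linarith [h2, key]
  have hρfar : ∀ y, y ∉ N → R₀ ≤ c * ‖x - y‖ := by
    intro y hy
    rw [hNdef, mem_setOf_eq] at hy
    linarith [lt_of_not_ge hy]
  have hF'far : ∀ y, y ∉ N → δ/2 * (t⁻¹ * (A * Wy y)) ≤ F' t y := by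
    intro y hy
    have hρ := hρfar y hy
    have hlog := hlogfact (c * ‖x - y‖) hρ
    have hLpos : (0:ℝ) < 8/(α*δ) := by positivity
    have hL0 : 0 < Real.log (Real.exp 1 + (c * ‖x - y‖) ^ 2) := by
      have h4c : 0 ≤ 4*c₁/δ := by positivity
      linarith
    have h1 : (2/α) * (1 / Real.log (Real.exp 1 + (c * ‖x - y‖) ^ 2)) ≤ δ/4 := by
      have h4c : 0 ≤ 4*c₁/δ := by positivity
      have hLb : 8/(α*δ) ≤ Real.log (Real.exp 1 + (c * ‖x - y‖) ^ 2) := by linarith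
      have hinv : 1 / Real.log (Real.exp 1 + (c * ‖x - y‖) ^ 2) ≤ α*δ/8 := by
        rw [div_le_iff₀ hL0]
        rw [div_le_iff₀ hαδ] at hLb
        linarith [hLb]
      calc (2/α) * (1 / Real.log (Real.exp 1 + (c * ‖x - y‖) ^ 2)) ≤ (2/α) * (α*δ/8) :=
            mul_le_mul_of_nonneg_left hinv (by positivity)
        _ = δ/4 := by field_simp; ring
    have h2 : (((d:ℝ)+α)/α) * (1 / (1 + (c * ‖x - y‖) ^ ((d:ℝ)+α))) ≤ δ/4 := by
      have hge := hrpowfact (c * ‖x - y‖) hρ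
      have hPpos : (0:ℝ) < 1 + (c * ‖x - y‖) ^ ((d:ℝ)+α) := P_pos (hρ0 y)
      have h4m : 0 < 4*((d:ℝ)+α)/(α*δ) := by positivity
      have hinv : 1 / (1 + (c * ‖x - y‖) ^ ((d:ℝ)+α)) ≤ α*δ/(4*((d:ℝ)+α)) := by
        rw [div_le_div_iff₀ hPpos (by positivity)]
        rw [div_le_iff₀ hαδ] at hge
        linarith [hge]
      calc (((d:ℝ)+α)/α) * (1 / (1 + (c * ‖x - y‖) ^ ((d:ℝ)+α)))
            ≤ (((d:ℝ)+α)/α) * (α*δ/(4*((d:ℝ)+α))) :=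
            mul_le_mul_of_nonneg_left hinv (by positivity)
        _ = δ/4 := by field_simp
    have hE : δ/2 ≤ Efun d α β s t ‖x - y‖ := by
      apply Efun_far hα0 hβ0 hs0 ht (norm_nonneg _) hδdef
      · rw [← hcdef]; exact h1
      · rw [← hcdef]; exact h2
    have hthis : F' t y = t⁻¹ * (A * Wy y) * Efun d α β s t ‖x - y‖ := by rw [hF't]
    rw [hthis]
    have hbase : 0 ≤ t⁻¹ * (A * Wy y) := mul_nonneg hti.le (mul_nonneg hA.le (hWy0 y))
    calc δ/2 * (t⁻¹ * (A * Wy y)) = t⁻¹ * (A * Wy y) * (δ/2) := by ring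
      _ ≤ t⁻¹ * (A * Wy y) * Efun d α β s t ‖x - y‖ := mul_le_mul_of_nonneg_left hE hbase
  have hnormsmul : ∀ y : EuclideanSpace ℝ (Fin d), ‖c • (x - y)‖ = c * ‖x - y‖ := by
    intro y
    rw [norm_smul, Real.norm_eq_abs, abs_of_pos hc]
  have hDnear : ∀ y, y ∈ N → D (c • (x - y)) ≤ C₂ := by
    intro y hy
    rw [hNdef, mem_setOf_eq] at hy
    exact le_trans (le_abs_self _) (hC₂ _ (by rw [hnormsmul y]; exact hy))
  have hDfar : ∀ y, y ∉ N → D (c • (x - y)) ≤ δ/4 * Wy y := by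
    intro y hy
    have hρ := hρfar y hy
    have h2ρ : 2 ≤ ‖c • (x - y)‖ := by rw [hnormsmul y]; linarith
    have hD := hDdecay _ h2ρ
    rw [hnormsmul y] at hD
    have hlog := hlogfact (c * ‖x - y‖) hρ
    have hLb : 4*c₁/δ ≤ Real.log (Real.exp 1 + (c * ‖x - y‖) ^ 2) := by
      have : 0 < 8/(α*δ) := by positivity
      linarith
    have hPpos : (0:ℝ) < 1 + (c * ‖x - y‖) ^ ((d:ℝ)+α) := P_pos (hρ0 y)
    have hc₁L : c₁ ≤ δ/4 * Real.log (Real.exp 1 + (c * ‖x - y‖) ^ 2) := by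
      rw [div_le_iff₀ hδ] at hLb
      linarith [hLb]
    have hWeq : Wy y = Real.log (Real.exp 1 + (c * ‖x - y‖) ^ 2)
        / (1 + (c * ‖x - y‖) ^ ((d:ℝ)+α)) := rfl
    calc D (c • (x - y)) ≤ c₁ / (1 + (c * ‖x - y‖) ^ ((d:ℝ)+α)) := hD
      _ ≤ (δ/4 * Real.log (Real.exp 1 + (c * ‖x - y‖) ^ 2))
          / (1 + (c * ‖x - y‖) ^ ((d:ℝ)+α)) := by
          exact (div_le_div_iff_of_pos_right hPpos).mpr hc₁L
      _ = δ/4 * Wy y := by rw [hWeq]; ring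
  -- integrated lower bound
  have hIndInt : ∀ e : ℝ, Integrable (N.indicator (fun _ => e)) μ :=
    fun e => (integrable_const e).indicator hNmeas
  have hIlow : -(t⁻¹ * A * C₆) * mN ≤ (∫ y, F' t y ∂μ) - (t⁻¹ * A) * J := by
    by_cases hJint : Integrable (fun y => D (c • (x - y))) μ
    · have hptw : ∀ y, N.indicator (fun _ => -(t⁻¹ * A * C₆)) y
          ≤ F' t y - (t⁻¹ * A) * D (c • (x - y)) := by
        intro y
        by_cases hy : y ∈ N
        · rw [Set.indicator_of_mem hy]
          have h1 := hF'low y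
          have h2 := hDnear y hy
          have h3 : (t⁻¹ * A) * D (c • (x - y)) ≤ (t⁻¹ * A) * C₂ :=
            mul_le_mul_of_nonneg_left h2 (mul_nonneg hti.le hA.le)
          rw [hC₆def]
          linarith [h1, h3]
        · rw [Set.indicator_of_notMem hy]
          have h1 := hF'far y hy
          have h2 := hDfar y hy
          have h3 : (t⁻¹ * A) * D (c • (x - y)) ≤ (t⁻¹ * A) * (δ/4 * Wy y) :=
            mul_le_mul_of_nonneg_left h2 (mul_nonneg hti.le hA.le)
          have hX4 : 0 ≤ δ * (t⁻¹ * (A * Wy y)) :=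
            mul_nonneg hδ.le (mul_nonneg hti.le (mul_nonneg hA.le (hWy0 y)))
          have hneg : 0 ≤ t⁻¹ * A * C₆ :=
            mul_nonneg (mul_nonneg hti.le hA.le) hC₆.le
          linarith [h1, h3, hX4, hneg]
      have hFD : Integrable (fun y => F' t y - (t⁻¹ * A) * D (c • (x - y))) μ :=
        hF'int.sub (hJint.const_mul _)
      have hmono := integral_mono (hIndInt _) hFD hptw
      rw [integral_indicator_const _ hNmeas] at hmono
      rw [integral_sub hF'int (hJint.const_mul _), integral_const_mul] at hmono
      rw [smul_eq_mul] at hmono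
      have hJeq : (∫ y, D (c • (x - y)) ∂μ) = J := hJdef.symm
      rw [hJeq] at hmono
      rw [measureReal_def, ← hmNdef] at hmono
      linarith [hmono]
    · have hJ0 : J = 0 := by rw [hJdef]; exact integral_undef hJint
      have hptw : ∀ y, N.indicator (fun _ => -(t⁻¹ * A * C₆)) y ≤ F' t y := by
        intro y
        by_cases hy : y ∈ N
        · rw [Set.indicator_of_mem hy]
          have h1 := hF'low y
          have h2 : 0 ≤ t⁻¹ * A * C₂ := mul_nonneg (mul_nonneg hti.le hA.le) hC₂0
          rw [hC₆def]
          linarith [h1, h2]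
        · rw [Set.indicator_of_notMem hy]
          have h1 := hF'far y hy
          have hX4 : 0 ≤ δ * (t⁻¹ * (A * Wy y)) :=
            mul_nonneg hδ.le (mul_nonneg hti.le (mul_nonneg hA.le (hWy0 y)))
          linarith [h1, hX4]
      have hmono := integral_mono (hIndInt _) hF'int hptw
      rw [integral_indicator_const _ hNmeas] at hmono
      rw [smul_eq_mul] at hmono
      rw [measureReal_def, ← hmNdef] at hmono
      rw [hJ0, mul_zero, sub_zero]
      linarith [hmono]
  -- upper bound by the nonlinear term
  have hup : k * (t⁻¹ * A * C₆) * mN ≤ (k * (A * g)) ^ (1 + β) := by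
    rcases eq_or_ne (μ N) 0 with hμN | hμN
    · have hmNz : mN = 0 := by rw [hmNdef, hμN, ENNReal.toReal_zero]
      rw [hmNz, mul_zero]
      exact Real.rpow_nonneg (mul_nonneg hk0.le (mul_nonneg hA.le hg0)) _
    · -- find a support point close to x
      have hNS : (N ∩ S).Nonempty := by
        by_contra hempty
        rw [Set.not_nonempty_iff_eq_empty] at hempty
        have hsub : N ⊆ Sᶜ := by
          intro y hy hyS
          exact absurd hempty (Set.nonempty_iff_ne_empty.mp ⟨y, hy, hyS⟩)
        exact hμN (le_antisymm
          (le_trans (measure_mono hsub) (le_of_eq hSsupp.2.1)) zero_le)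
      obtain ⟨z, hzN, hzS⟩ := hNS
      have ht1α : 0 < t ^ ((1:ℝ)/α) := Real.rpow_pos_of_pos ht _
      set r₀ : ℝ := min (t ^ ((1:ℝ)/α)) 1 with hr₀def
      have hr₀pos : 0 < r₀ := lt_min ht1α one_pos
      have hr₀le1 : r₀ ≤ 1 := min_le_right _ _
      have hF2z := hF2 z hzS r₀ hr₀pos hr₀le1
      have hct : c * t ^ ((1:ℝ)/α) = 1 := by
        rw [hcdef, ← Real.rpow_add ht, show -(1:ℝ)/α + 1/α = 0 by ring, Real.rpow_zero]
      have hcr₀ : c * r₀ ≤ 1 := by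
        have : c * r₀ ≤ c * t ^ ((1:ℝ)/α) :=
          mul_le_mul_of_nonneg_left (min_le_left _ _) hc.le
        linarith [hct]
      have hzn : c * ‖x - z‖ ≤ R₀ := hzN
      have hz_near : ∀ y ∈ closedBall z r₀, c * ‖x - y‖ ≤ R₀ + 1 := by
        intro y hy
        rw [mem_closedBall] at hy
        have htri : ‖x - y‖ ≤ ‖x - z‖ + dist z y := by
          rw [← dist_eq_norm, ← dist_eq_norm]
          exact dist_triangle x z y
        have hdzy : dist z y ≤ r₀ := by rw [dist_comm]; exact hy
        have := mul_le_mul_of_nonneg_left htri hc.le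
        have h2 : c * dist z y ≤ c * r₀ := mul_le_mul_of_nonneg_left hdzy hc.le
        linarith [this, h2, hzn, hcr₀]
      have hWz : ∀ y ∈ closedBall z r₀, w₁ ≤ Wy y := by
        intro y hy
        have := Wfn_ge (d := d) hα0 (hρ0 y) (hz_near y hy)
        rw [hw₁def]
        exact this
      have hgl : w₁ * (Cund * r₀ ^ s) ≤ g := by
        have hptw : ∀ y, (closedBall z r₀).indicator (fun _ => w₁) y ≤ Wy y := by
          intro y
          by_cases hy : y ∈ closedBall z r₀
          · rw [Set.indicator_of_mem hy]; exact hWz y hy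
          · rw [Set.indicator_of_notMem hy]; exact hWy0 y
        have hmono := integral_mono ((integrable_const w₁).indicator measurableSet_closedBall)
          hWyint hptw
        rw [integral_indicator_const _ measurableSet_closedBall, smul_eq_mul] at hmono
        have hμcb : Cund * r₀ ^ s ≤ (μ (closedBall z r₀)).toReal := by
          have h1 := ENNReal.toReal_mono (measure_ne_top μ _) hF2z
          rwa [ENNReal.toReal_ofReal
            (mul_nonneg hCund.le (Real.rpow_nonneg hr₀pos.le _))] at h1
        have := mul_le_mul_of_nonneg_right hμcb hw₁.le
        calc w₁ * (Cund * r₀ ^ s) = Cund * r₀ ^ s * w₁ := by ring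
          _ ≤ (μ (closedBall z r₀)).toReal * w₁ := this
          _ ≤ g := hmono
      have hr₀spos : 0 < Cund * r₀ ^ s := mul_pos hCund (Real.rpow_pos_of_pos hr₀pos _)
      have hgpos : 0 < g := lt_of_lt_of_le (mul_pos hw₁ hr₀spos) hgl
      have hmNg : w₁ * mN ≤ g := by
        have hptw : ∀ y, N.indicator (fun _ => w₁) y ≤ Wy y := by
          intro y
          by_cases hy : y ∈ N
          · rw [Set.indicator_of_mem hy]
            have hyρ : c * ‖x - y‖ ≤ R₀ + 1 := by
              have : c * ‖x - y‖ ≤ R₀ := hy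
              linarith
            have := Wfn_ge (d := d) hα0 (hρ0 y) hyρ
            rw [hw₁def]; exact this
          · rw [Set.indicator_of_notMem hy]; exact hWy0 y
        have hmono := integral_mono (hIndInt w₁) hWyint hptw
        rw [integral_indicator_const _ hNmeas, smul_eq_mul, measureReal_def, ← hmNdef] at hmono
        linarith [hmono]
      have hσg : c₇ ≤ (1 + σ) * g := by
        rcases le_total t 1 with ht1 | ht1
        · have hr₀eq : r₀ = t ^ ((1:ℝ)/α) :=
            min_eq_left (Real.rpow_le_one ht.le ht1 (by positivity))
          have hr₀s : r₀ ^ s = t ^ (s/α) := by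
            rw [hr₀eq, ← Real.rpow_mul ht.le, show (1:ℝ)/α*s = s/α by ring]
          have hσs : σ * t ^ (s/α) = 1 := by
            rw [hσdef, ← Real.rpow_add ht, show -s/α + s/α = 0 by ring, Real.rpow_zero]
          have h1 : σ * (w₁ * (Cund * r₀ ^ s)) ≤ σ * g := mul_le_mul_of_nonneg_left hgl hσ.le
          have h2 : σ * (w₁ * (Cund * r₀ ^ s)) = c₇ := by
            rw [hr₀s, hc₇def]
            linear_combination (w₁ * Cund) * hσs
          have h3 : 0 ≤ σ * g := mul_nonneg hσ.le hg0
          linarith [h1, h2, h3, hg0]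
        · have hr₀eq : r₀ = 1 := min_eq_right (Real.one_le_rpow ht1 (by positivity))
          have h1 : w₁ * Cund ≤ g := by
            rw [hr₀eq, Real.one_rpow, mul_one] at hgl
            exact hgl
          have h2 : 0 ≤ σ * g := mul_nonneg hσ.le hg0
          have : c₇ = Cund * w₁ := hc₇def
          linarith [h1, h2, this]
      -- the rpow computation
      have hkAg : 0 < k * (A * g) := mul_pos hk0 (mul_pos hA hgpos)
      have hrpow : (k * (A * g)) ^ (1 + β) = (k * (A * g)) * ((k * (A * g)) ^ β) := by
        rw [Real.rpow_add hkAg, Real.rpow_one]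
      have hsplit : (k * (A * g)) ^ β = k ^ β * (t⁻¹ * ((1 + σ) * g) ^ β) := by
        rw [Real.mul_rpow hk0.le (mul_nonneg hA.le hg0)]
        congr 1
        rw [hAdef, mul_assoc,
          Real.mul_rpow (Real.rpow_pos_of_pos ht _).le
            (mul_nonneg (by linarith) hg0),
          ← Real.rpow_mul ht.le, show -(1:ℝ)/β*β = -1 by field_simp, Real.rpow_neg_one]
      have hc₇rpow : c₇ ^ β ≤ ((1 + σ) * g) ^ β := Real.rpow_le_rpow hc₇.le hσg hβ0.le
      have hkβ : 0 < k ^ β := Real.rpow_pos_of_pos hk0 _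
      have hchain : t⁻¹ * (C₆ / w₁) ≤ (k * (A * g)) ^ β := by
        rw [hsplit]
        have h1 : k ^ β * (t⁻¹ * c₇ ^ β) ≤ k ^ β * (t⁻¹ * ((1 + σ) * g) ^ β) :=
          mul_le_mul_of_nonneg_left (mul_le_mul_of_nonneg_left hc₇rpow hti.le) hkβ.le
        have h2 : t⁻¹ * (C₆ / w₁) ≤ k ^ β * (t⁻¹ * c₇ ^ β) := by
          have h3 := mul_le_mul_of_nonneg_left hkey hti.le
          calc t⁻¹ * (C₆ / w₁) ≤ t⁻¹ * (k ^ β * c₇ ^ β) := h3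
            _ = k ^ β * (t⁻¹ * c₇ ^ β) := by ring
        linarith [h1, h2]
      have hmNle : mN ≤ g / w₁ := by
        rw [le_div_iff₀ hw₁]
        linarith [hmNg]
      calc k * (t⁻¹ * A * C₆) * mN ≤ k * (t⁻¹ * A * C₆) * (g / w₁) := by
            apply mul_le_mul_of_nonneg_left hmNle
            exact mul_nonneg hk0.le (mul_nonneg (mul_nonneg hti.le hA.le) hC₆.le)
        _ = (k * (A * g)) * (t⁻¹ * (C₆ / w₁)) := by field_simp
        _ ≤ (k * (A * g)) * ((k * (A * g)) ^ β) :=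
            mul_le_mul_of_nonneg_left hchain hkAg.le
        _ = (k * (A * g)) ^ (1 + β) := hrpow.symm
  -- assemble
  have hhfn : hfn d α β s μ k t x = k * (A * g) := by
    have hIntg : (∫ y, wfn d α β s t (x - y) ∂μ) = A * g := by
      have heq2 : (fun y => wfn d α β s t (x - y)) = fun y => A * Wy y := rfl
      rw [heq2, integral_const_mul, hgdef]
    simp only [hfn]
    rw [hIntg]
  rw [hhfn]
  have hBt : t ^ (-(1:ℝ)/β - 1) * (1 + σ) = t⁻¹ * A := by
    rw [Real.rpow_sub ht, Real.rpow_one, hAdef]; ring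
  have hgoalJ : k * t ^ (-(1:ℝ)/β - 1) * (1 + σ) * J = k * ((t⁻¹ * A) * J) := by
    calc k * t ^ (-(1:ℝ)/β - 1) * (1 + σ) * J
        = k * ((t ^ (-(1:ℝ)/β - 1) * (1 + σ)) * J) := by ring
      _ = k * ((t⁻¹ * A) * J) := by rw [hBt]
  rw [hgoalJ]
  have hmul := mul_le_mul_of_nonneg_left hIlow hk0.le
  -- hmul : k * (-(t⁻¹*A*C₆) * mN) ≤ k * ((∫ F') - (t⁻¹*A)*J)
  linarith [hup, hmul]
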